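/- C_max(ρ) := min_{δ diagonal state} log₂ min{λ : ρ ≤ λδ} is monotone under MIO: if Λ is a CPTP map sending every diagonal state to a diagonal state, then C_max(Λ(ρ)) ≤ C_max(ρ) for every density operator ρ. -/

import Mathlib

open Matrix
open scoped ComplexOrder

/-- `E` is completely positive: `id_k ⊗ E` maps positive semidefinite matrices to
positive semidefinite matrices for every `k`. -/
def IsCP (dA dB : ℕ)
    (E : Matrix (Fin dA) (Fin dA) ℂ →ₗ[ℂ] Matrix (Fin dB) (Fin dB) ℂ) : Prop :=
  ∀ (k : ℕ) (M : Matrix (Fin k × Fin dA) (Fin k × Fin dA) ℂ), M.PosSemidef →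
    (Matrix.of fun p q => E (Matrix.of fun i j => M (p.1, i) (q.1, j)) p.2 q.2 :
      Matrix (Fin k × Fin dB) (Fin k × Fin dB) ℂ).PosSemidef

/-- `E` is trace preserving. -/
def IsTP (dA dB : ℕ)
    (E : Matrix (Fin dA) (Fin dA) ℂ →ₗ[ℂ] Matrix (Fin dB) (Fin dB) ℂ) : Prop :=
  ∀ X : Matrix (Fin dA) (Fin dA) ℂ, (E X).trace = X.trace

/-- A CP map sends PSD matrices to PSD matrices (take `k = 1`). -/
lemma CP_psd {d : ℕ} {Λ : Matrix (Fin d) (Fin d) ℂ →ₗ[ℂ] Matrix (Fin d) (Fin d) ℂ}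
    (hCP : IsCP d d Λ) {X : Matrix (Fin d) (Fin d) ℂ} (hX : X.PosSemidef) :
    (Λ X).PosSemidef := by
  have h := hCP 1 (X.submatrix Prod.snd Prod.snd) (hX.submatrix _)
  have hN : (Matrix.of fun p q =>
      Λ (Matrix.of fun i j => (X.submatrix Prod.snd Prod.snd) (p.1, i) (q.1, j)) p.2 q.2 :
      Matrix (Fin 1 × Fin d) (Fin 1 × Fin d) ℂ) =
      (Λ X).submatrix Prod.snd Prod.snd := by
    ext p q
    simp only [Matrix.of_apply, Matrix.submatrix_apply]
    congr 1
  rw [hN] at h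
  have h2 := h.submatrix (fun i : Fin d => ((0 : Fin 1), i))
  simpa [Matrix.submatrix_submatrix] using h2

/-- The diagonal entries of a PSD matrix are nonnegative. -/
lemma psd_diag_nonneg {d : ℕ} {M : Matrix (Fin d) (Fin d) ℂ} (hM : M.PosSemidef)
    (i : Fin d) : 0 ≤ M i i := by
  have := hM.diag_nonneg (i := i)
  simpa [dotProduct, Pi.single_apply, apply_ite] using this

/-- The trace of a PSD matrix is nonnegative. -/
lemma psd_trace_nonneg {d : ℕ} {M : Matrix (Fin d) (Fin d) ℂ} (hM : M.PosSemidef) :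
    0 ≤ M.trace := by
  exact Finset.sum_nonneg fun i _ => psd_diag_nonneg hM i

/-- A density matrix is dominated by the identity. -/
lemma one_sub_psd {d : ℕ} {ρ : Matrix (Fin d) (Fin d) ℂ} (hρ : ρ.PosSemidef)
    (hρtr : ρ.trace = 1) : ((1 : Matrix (Fin d) (Fin d) ℂ) - ρ).PosSemidef := by
  have hH := hρ.1
  have hspec := hH.spectral_theorem
  rw [Unitary.conjStarAlgAut_apply] at hspec
  set U : Matrix (Fin d) (Fin d) ℂ := (hH.eigenvectorUnitary : Matrix (Fin d) (Fin d) ℂ) with hU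
  have hUU : U * star U = 1 := (Matrix.mem_unitaryGroup_iff).mp hH.eigenvectorUnitary.2
  have hUU' : star U * U = 1 := (Matrix.mem_unitaryGroup_iff').mp hH.eigenvectorUnitary.2
  have htr : ∑ i, (hH.eigenvalues i : ℂ) = 1 := by
    have := congrArg Matrix.trace hspec
    rw [hρtr, Matrix.trace_mul_cycle, hUU', one_mul, Matrix.trace_diagonal] at this
    simpa using this.symm
  have hsum : ∑ i, hH.eigenvalues i = 1 := by
    have := congrArg Complex.re htr
    simpa using this
  have hle : ∀ i, hH.eigenvalues i ≤ 1 := by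
    intro i
    rw [← hsum]
    exact Finset.single_le_sum (fun j _ => hρ.eigenvalues_nonneg j) (Finset.mem_univ i)
  have key : (1 : Matrix (Fin d) (Fin d) ℂ) - ρ =
      U * diagonal (fun i => ((1 - hH.eigenvalues i : ℝ) : ℂ)) * star U := by
    conv_lhs => rw [hspec, ← hUU]
    rw [← Matrix.sub_mul]
    have hdiag : (diagonal fun i => ((1 - hH.eigenvalues i : ℝ) : ℂ)) =
        1 - diagonal (RCLike.ofReal ∘ hH.eigenvalues) := by
      rw [← Matrix.diagonal_one, Matrix.diagonal_sub]
      congr 1 <;> try (ext i; simp)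
    rw [hdiag, Matrix.mul_sub, mul_one]
  rw [key]
  have hstar : (star U : Matrix (Fin d) (Fin d) ℂ) = Uᴴ := rfl
  rw [hstar]
  exact (Matrix.posSemidef_diagonal_iff.mpr fun i => by
    rw [Complex.zero_le_real]; linarith [hle i]).mul_mul_conjTranspose_same U

/-- `C_max(ρ) := min_{δ diagonal state} log₂ min{λ ≥ 0 : ρ ≤ λδ}`
is monotone under maximally incoherent operations: if `Λ` is CPTP and sends
every diagonal state to a diagonal state, then `C_max(Λ(ρ)) ≤ C_max(ρ)` for
every density operator `ρ`. -/
theorem cmax_monotone_MIO (d : ℕ)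
    (Λ : Matrix (Fin d) (Fin d) ℂ →ₗ[ℂ] Matrix (Fin d) (Fin d) ℂ)
    (hCP : IsCP d d Λ) (hTP : IsTP d d Λ)
    (hMIO : ∀ δ : Matrix (Fin d) (Fin d) ℂ, δ.IsDiag → (Λ δ).IsDiag)
    (ρ : Matrix (Fin d) (Fin d) ℂ) (hρ : ρ.PosSemidef) (hρtr : ρ.trace = 1) :
    Real.logb 2
        (sInf {lam : ℝ | 0 ≤ lam ∧ ∃ δ : Matrix (Fin d) (Fin d) ℂ,
          δ.PosSemidef ∧ δ.trace = 1 ∧ δ.IsDiag ∧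
          ((lam : ℂ) • δ - Λ ρ).PosSemidef}) ≤
      Real.logb 2
        (sInf {lam : ℝ | 0 ≤ lam ∧ ∃ δ : Matrix (Fin d) (Fin d) ℂ,
          δ.PosSemidef ∧ δ.trace = 1 ∧ δ.IsDiag ∧
          ((lam : ℂ) • δ - ρ).PosSemidef}) := by
  rcases Nat.eq_zero_or_pos d with hd | hd
  · exfalso
    subst hd
    simp [Matrix.trace] at hρtr
  set S : Set ℝ := {lam : ℝ | 0 ≤ lam ∧ ∃ δ : Matrix (Fin d) (Fin d) ℂ,
      δ.PosSemidef ∧ δ.trace = 1 ∧ δ.IsDiag ∧ ((lam : ℂ) • δ - ρ).PosSemidef} with hS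
  set S' : Set ℝ := {lam : ℝ | 0 ≤ lam ∧ ∃ δ : Matrix (Fin d) (Fin d) ℂ,
      δ.PosSemidef ∧ δ.trace = 1 ∧ δ.IsDiag ∧ ((lam : ℂ) • δ - Λ ρ).PosSemidef} with hS'
  have hdC : (d : ℂ) ≠ 0 := Nat.cast_ne_zero.mpr hd.ne'
  -- S ⊆ S'
  have hsub : S ⊆ S' := by
    rintro lam ⟨h0, δ, hpsd, htr, hdiag, hple⟩
    refine ⟨h0, Λ δ, CP_psd hCP hpsd, (hTP δ).trans htr, hMIO δ hdiag, ?_⟩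
    have : (lam : ℂ) • Λ δ - Λ ρ = Λ ((lam : ℂ) • δ - ρ) := by
      simp only [map_sub, LinearMap.map_smul]
    rw [this]
    exact CP_psd hCP hple
  -- S is nonempty
  have hne : S.Nonempty := by
    refine ⟨(d : ℝ), by positivity, Matrix.diagonal (fun _ => (d : ℂ)⁻¹), ?_, ?_, ?_, ?_⟩
    · exact Matrix.posSemidef_diagonal_iff.mpr fun i => by
        rw [show ((d : ℂ)⁻¹ : ℂ) = (((d : ℝ)⁻¹ : ℝ) : ℂ) by push_cast; ring,
          Complex.zero_le_real]
        positivity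
    · simp [Matrix.trace_diagonal, Finset.sum_const, mul_inv_cancel₀ hdC]
    · exact Matrix.isDiag_diagonal _
    · have : ((d : ℝ) : ℂ) • Matrix.diagonal (fun _ : Fin d => (d : ℂ)⁻¹) =
          (1 : Matrix (Fin d) (Fin d) ℂ) := by
        ext i j
        by_cases h : i = j <;>
          simp [Matrix.diagonal, Matrix.one_apply, h, smul_eq_mul, mul_inv_cancel₀ hdC]
      rw [this]
      exact one_sub_psd hρ hρtr
  -- every element of S' is at least 1
  have hone : ∀ lam ∈ S', (1 : ℝ) ≤ lam := by
    rintro lam ⟨h0, δ, hpsd, htr, hdiag, hple⟩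
    have htrn := psd_trace_nonneg hple
    have htreq : ((lam : ℂ) • δ - Λ ρ).trace = ((lam - 1 : ℝ) : ℂ) := by
      rw [Matrix.trace_sub, Matrix.trace_smul, htr, hTP, hρtr, smul_eq_mul, mul_one]
      push_cast
      ring
    rw [htreq, Complex.zero_le_real] at htrn
    linarith
  have hne' : S'.Nonempty := hne.mono hsub
  have hbdd : BddBelow S' := ⟨0, fun x hx => hx.1⟩
  have hinf_le : sInf S' ≤ sInf S := csInf_le_csInf hbdd hne hsub
  have hinf_pos : (0 : ℝ) < sInf S' := lt_of_lt_of_le one_pos (le_csInf hne' hone)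
  exact Real.logb_le_logb_of_le (by norm_num) hinf_pos hinf_le
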